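/- Let G be a simple graph on n ≥ 5 vertices {x_1,...,x_n} with no isolated vertex and at least one edge. Then for every integer k ≥ 2, I_c(G)^(k) ≠ I_c(G)^k. -/

import Mathlib

open MvPolynomial

noncomputable def symbPow {R : Type*} [CommRing R] (I : Ideal R) (k : ℕ) : Ideal R :=
  ⨅ p ∈ I.minimalPrimes, p ^ k

noncomputable def compIdeal {V : Type*} [Fintype V] [DecidableEq V]
    (K : Type*) [Field K] (G : SimpleGraph V) : Ideal (MvPolynomial V K) :=
  Ideal.span {m | ∃ i j, G.Adj i j ∧ m = ∏ l ∈ Finset.univ \ {i, j}, X l}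

/-- The weighted (total) degree of an exponent vector. -/
def wdeg {n : ℕ} (d : Fin n →₀ ℕ) : ℕ := ∑ l, d l

lemma wdeg_add {n : ℕ} (d e : Fin n →₀ ℕ) : wdeg (d + e) = wdeg d + wdeg e := by
  simp [wdeg, Finset.sum_add_distrib]

lemma wdeg_smul {n : ℕ} (c : ℕ) (d : Fin n →₀ ℕ) : wdeg (c • d) = c * wdeg d := by
  simp [wdeg, Finset.mul_sum]

lemma wdeg_single {n : ℕ} (l : Fin n) : wdeg (Finsupp.single l 1) = 1 := by
  simp [wdeg, Finsupp.single_apply]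

lemma wdeg_finset_sum {n : ℕ} (s : Finset (Fin n)) (f : Fin n → (Fin n →₀ ℕ)) :
    wdeg (∑ i ∈ s, f i) = ∑ i ∈ s, wdeg (f i) := by
  classical
  induction s using Finset.induction with
  | empty => simp [wdeg]
  | insert _ _ h ih =>
    rw [Finset.sum_insert h, Finset.sum_insert h, wdeg_add, ih]

lemma prod_X_eq {n : ℕ} {K : Type*} [Field K] (s : Finset (Fin n)) :
    (∏ l ∈ s, (X l : MvPolynomial (Fin n) K)) =
      monomial (∑ l ∈ s, Finsupp.single l 1) 1 := by
  classical
  induction s using Finset.induction with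
  | empty => simp [monomial_eq]
  | insert _ _ h ih =>
    rw [Finset.prod_insert h, Finset.sum_insert h, ih, X, monomial_mul, one_mul]

/-- The ideal of polynomials all of whose monomials have degree at least `c`. -/
noncomputable def degIdeal (n : ℕ) (K : Type*) [Field K] (c : ℕ) :
    Ideal (MvPolynomial (Fin n) K) where
  carrier := {f | ∀ d ∈ f.support, c ≤ wdeg d}
  zero_mem' := by simp
  add_mem' := by
    intro a b ha hb d hd
    rcases Finset.mem_union.1 (MvPolynomial.support_add hd) with h | h
    exacts [ha d h, hb d h]
  smul_mem' := by
    intro r f hf d hd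
    rw [smul_eq_mul] at hd
    obtain ⟨d1, h1, d2, h2, rfl⟩ := Finset.mem_add.1 (MvPolynomial.support_mul _ _ hd)
    calc c ≤ wdeg d2 := hf d2 h2
    _ ≤ wdeg (d1 + d2) := by rw [wdeg_add]; omega

lemma mem_degIdeal {n : ℕ} {K : Type*} [Field K] {c : ℕ} {f : MvPolynomial (Fin n) K} :
    f ∈ degIdeal n K c ↔ ∀ d ∈ f.support, c ≤ wdeg d := Iff.rfl

lemma degIdeal_mul {n : ℕ} {K : Type*} [Field K] {a b : ℕ}
    {f g : MvPolynomial (Fin n) K} (hf : f ∈ degIdeal n K a) (hg : g ∈ degIdeal n K b) :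
    f * g ∈ degIdeal n K (a + b) := by
  intro d hd
  obtain ⟨d1, h1, d2, h2, rfl⟩ := Finset.mem_add.1 (MvPolynomial.support_mul _ _ hd)
  rw [wdeg_add]
  exact Nat.add_le_add (hf d1 h1) (hg d2 h2)

/-- For a graph on `n ≥ 5` vertices with no isolated vertex and at least one edge,
`I_c(G)^(k) ≠ I_c(G)^k` for every `k ≥ 2`. -/
theorem stmt14 {n : ℕ} (hn : 5 ≤ n) (K : Type*) [Field K] (G : SimpleGraph (Fin n))
    (hiso : ∀ v, ∃ w, G.Adj v w) (hedge : ∃ i j, G.Adj i j)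
    (k : ℕ) (hk : 2 ≤ k) :
    symbPow (compIdeal K G) k ≠ compIdeal K G ^ k := by
  classical
  obtain ⟨i0, j0, hadj⟩ := hedge
  set I := compIdeal K G with hI
  set g : MvPolynomial (Fin n) K := ∏ l ∈ Finset.univ \ {i0, j0}, X l with hgdef
  set P : MvPolynomial (Fin n) K := ∏ l, X l with hPdef
  set m : MvPolynomial (Fin n) K := P * g ^ (k - 2) with hmdef
  have hgI : g ∈ I := Ideal.subset_span ⟨i0, j0, hadj, rfl⟩
  -- weighted degree of a generator for edge (i,j)
  have hcard : ∀ i j : Fin n, i ≠ j →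
      (Finset.univ \ ({i, j} : Finset (Fin n))).card = n - 2 := by
    intro i j hij
    rw [Finset.card_sdiff_of_subset (Finset.subset_univ _), Finset.card_univ, Fintype.card_fin,
      Finset.card_pair hij]
  have hwdeg_gen : ∀ s : Finset (Fin n),
      wdeg (∑ l ∈ s, Finsupp.single l 1) = s.card := by
    intro s
    rw [wdeg_finset_sum]
    simp [wdeg_single]
  -- m is in the symbolic power
  have hm_symb : m ∈ symbPow I k := by
    rw [symbPow]
    simp only [Ideal.mem_iInf]
    intro p hp
    obtain ⟨⟨hprime, hIp⟩, -⟩ := hp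
    haveI := hprime
    obtain ⟨a, ha, hXa⟩ := Ideal.IsPrime.prod_mem_iff.1 (hIp hgI)
    obtain ⟨w, haw⟩ := hiso a
    have hg2 : (∏ l ∈ Finset.univ \ {a, w}, X l : MvPolynomial (Fin n) K) ∈ I :=
      Ideal.subset_span ⟨a, w, haw, rfl⟩
    obtain ⟨b, hb, hXb⟩ := Ideal.IsPrime.prod_mem_iff.1 (hIp hg2)
    have hab : a ≠ b := by
      intro h
      subst h
      simp at hb
    have hPfact : P = (∏ l ∈ Finset.univ \ {a, b}, X l) * (X a * X b) := by
      rw [← Finset.prod_pair hab, Finset.prod_sdiff (Finset.subset_univ _)]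
    have hP2 : P ∈ p ^ 2 := by
      rw [hPfact, sq]
      exact Ideal.mul_mem_left _ _ (Ideal.mul_mem_mul hXa hXb)
    have hgp : g ^ (k - 2) ∈ p ^ (k - 2) := Ideal.pow_mem_pow (hIp hgI) _
    have hmem : m ∈ p ^ 2 * p ^ (k - 2) := Ideal.mul_mem_mul hP2 hgp
    rwa [← pow_add, show 2 + (k - 2) = k by omega] at hmem
  -- I ≤ degIdeal (n-2)
  have hI1 : I ≤ degIdeal n K (n - 2) := by
    rw [hI, compIdeal, Ideal.span_le]
    rintro f ⟨i, j, hij, rfl⟩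
    rw [SetLike.mem_coe, mem_degIdeal]
    intro d hd
    rw [prod_X_eq, support_monomial] at hd
    simp only [one_ne_zero, if_false, Finset.mem_singleton] at hd
    subst hd
    rw [hwdeg_gen, hcard i j hij.ne]
  -- I^j ≤ degIdeal (j*(n-2))
  have hIJ : ∀ j : ℕ, I ^ j ≤ degIdeal n K (j * (n - 2)) := by
    intro j
    induction j with
    | zero => intro f _ d _; simp
    | succ j ih =>
      rw [pow_succ]
      refine Ideal.mul_le.2 fun r hr s hs => ?_
      have := degIdeal_mul (ih hr) (hI1 hs)
      rwa [show j * (n - 2) + (n - 2) = (j + 1) * (n - 2) by ring] at this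
  -- m is not in degIdeal (k*(n-2))
  have hm_not : m ∉ degIdeal n K (k * (n - 2)) := by
    intro hmem
    have hm_eq : m = monomial ((∑ l : Fin n, Finsupp.single l 1) +
        (k - 2) • (∑ l ∈ Finset.univ \ {i0, j0}, Finsupp.single l 1)) 1 := by
      rw [hmdef, hPdef, hgdef, prod_X_eq, prod_X_eq, monomial_pow, monomial_mul,
        one_pow, one_mul]
    have hd : ((∑ l : Fin n, Finsupp.single l 1) +
        (k - 2) • (∑ l ∈ Finset.univ \ {i0, j0}, Finsupp.single l 1)) ∈ m.support := by
      rw [hm_eq, support_monomial]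
      simp
    have hle := hmem _ hd
    rw [wdeg_add, wdeg_smul, hwdeg_gen, hwdeg_gen, Finset.card_univ, Fintype.card_fin,
      hcard i0 j0 hadj.ne] at hle
    have hkeq : k * (n - 2) = (k - 2) * (n - 2) + 2 * (n - 2) := by
      rw [← Nat.add_mul]
      congr 1
      omega
    rw [hkeq] at hle
    omega
  intro heq
  rw [heq] at hm_symb
  exact hm_not (hIJ k hm_symb)
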